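/- Let X_1, …, X_n be {0,1}-valued random variables on a common probability space with p_i = P(X_i = 1), W = X_1 + ⋯ + X_n, and E[W] = λ > 0. Suppose the X_i are totally positively dependent (TPD). Then d_TV(L(W), Po(λ)) ≤ ((1 − e^{−λ})/λ)·( E[W²] + 2·Σ_{i=1}^n p_i² − λ(λ+1) ). -/

import Mathlib

open MeasureTheory ProbabilityTheory

/-- Total variation distance between two laws on `ℤ`. -/
noncomputable def dTV (μ ν : Measure ℤ) : ℝ :=
  ⨆ B : Set ℤ, |(μ B).toReal - (ν B).toReal|

noncomputable def pois (lam : ℝ) (j : ℕ) : ℝ :=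
  Real.exp (-lam) * lam ^ j / (Nat.factorial j : ℝ)

noncomputable def poisF (lam : ℝ) (j : ℕ) : ℝ :=
  ∑ i ∈ Finset.range (j + 1), pois lam i

noncomputable def poisT (lam : ℝ) (j : ℕ) : ℝ := 1 - poisF lam j

noncomputable def poisS (lam : ℝ) (A : Set ℕ) (j : ℕ) : ℝ :=
  ∑ i ∈ Finset.range (j + 1), A.indicator (pois lam) i

noncomputable def steinG (lam qA : ℝ) (A : Set ℕ) : ℕ → ℝ
  | 0 => 0
  | (j + 1) => (poisS lam A j - qA * poisF lam j) / (lam * pois lam j)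

section lemmasA
variable {lam : ℝ}

lemma pois_pos (hl : 0 < lam) (j : ℕ) : 0 < pois lam j := by
  unfold pois
  positivity

lemma pois_nonneg (hl : 0 < lam) (j : ℕ) : 0 ≤ pois lam j := (pois_pos hl j).le

lemma pois_succ (hl : 0 < lam) (j : ℕ) :
    pois lam (j + 1) = (lam / ((j : ℝ) + 1)) * pois lam j := by
  unfold pois
  rw [Nat.factorial_succ, pow_succ]
  have h1 : ((j : ℝ) + 1) ≠ 0 := by positivity
  have h2 : ((Nat.factorial j : ℕ) : ℝ) ≠ 0 := by
    exact_mod_cast Nat.factorial_ne_zero j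
  push_cast
  field_simp

lemma pois_summable : Summable (pois lam) := by
  unfold pois
  simp_rw [mul_div_assoc]
  exact (Real.summable_pow_div_factorial lam).mul_left _

lemma pois_tsum : ∑' j, pois lam j = 1 := by
  unfold pois
  simp_rw [mul_div_assoc]
  rw [tsum_mul_left]
  have : ∑' n : ℕ, lam ^ n / (Nat.factorial n : ℝ) = Real.exp lam := by
    rw [Real.exp_eq_exp_ℝ, NormedSpace.exp_eq_tsum_div]
  rw [this, ← Real.exp_add]
  simp

lemma poisT_eq_tsum (hl : 0 < lam) (j : ℕ) : poisT lam j = ∑' i, pois lam (i + (j + 1)) := by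
  have h := Summable.sum_add_tsum_nat_add (f := pois lam) (j + 1) (pois_summable (lam := lam))
  unfold poisT poisF
  rw [pois_tsum (lam := lam)] at h
  linarith

lemma poisT_nonneg (hl : 0 < lam) (j : ℕ) : 0 ≤ poisT lam j := by
  rw [poisT_eq_tsum hl]
  exact tsum_nonneg fun i => pois_nonneg hl _

lemma poisF_nonneg (hl : 0 < lam) (j : ℕ) : 0 ≤ poisF lam j :=
  Finset.sum_nonneg fun i _ => pois_nonneg hl i

lemma poisS_nonneg (hl : 0 < lam) (A : Set ℕ) (j : ℕ) : 0 ≤ poisS lam A j :=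
  Finset.sum_nonneg fun i _ => Set.indicator_nonneg (fun k _ => pois_nonneg hl k) i

/-- `F j / π j` is nondecreasing (cross-multiplied form). -/
lemma poisF_ratio (hl : 0 < lam) (j : ℕ) :
    poisF lam j * pois lam (j + 1) ≤ poisF lam (j + 1) * pois lam j := by
  have key : ∀ i, i ≤ j → pois lam i * pois lam (j + 1) ≤ pois lam (i + 1) * pois lam j := by
    intro i hij
    rw [pois_succ hl, pois_succ hl]
    have hijR : (i : ℝ) ≤ (j : ℝ) := Nat.cast_le.mpr hij
    have h1 : lam / ((j : ℝ) + 1) ≤ lam / ((i : ℝ) + 1) := by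
      apply div_le_div_of_nonneg_left hl.le (by positivity)
      linarith
    have h2 : 0 ≤ pois lam i * pois lam j := mul_nonneg (pois_nonneg hl _) (pois_nonneg hl _)
    calc pois lam i * ((lam / ((j : ℝ) + 1)) * pois lam j)
        = (lam / ((j : ℝ) + 1)) * (pois lam i * pois lam j) := by ring
      _ ≤ (lam / ((i : ℝ) + 1)) * (pois lam i * pois lam j) :=
          mul_le_mul_of_nonneg_right h1 h2
      _ = (lam / ((i : ℝ) + 1)) * pois lam i * pois lam j := by ring
  unfold poisF
  rw [Finset.sum_mul, Finset.sum_mul, Finset.sum_range_succ' (fun i => pois lam i * pois lam j)]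
  have h0 : 0 ≤ pois lam 0 * pois lam j := mul_nonneg (pois_nonneg hl _) (pois_nonneg hl _)
  have := Finset.sum_le_sum (f := fun i => pois lam i * pois lam (j + 1))
    (g := fun i => pois lam (i + 1) * pois lam j)
    (s := Finset.range (j + 1)) (fun i hi => key i (Nat.lt_succ_iff.mp (Finset.mem_range.mp hi)))
  linarith

/-- `T j / π j` is nonincreasing (cross-multiplied form). -/
lemma poisT_ratio (hl : 0 < lam) (j : ℕ) :
    poisT lam (j + 1) * pois lam j ≤ poisT lam j * pois lam (j + 1) := by
  rw [poisT_eq_tsum hl, poisT_eq_tsum hl, ← tsum_mul_right, ← tsum_mul_right]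
  apply Summable.tsum_le_tsum _ (((pois_summable (lam := lam)).comp_injective
    (add_left_injective (j + 2))).mul_right _)
    (((pois_summable (lam := lam)).comp_injective (add_left_injective (j + 1))).mul_right _)
  intro i
  show pois lam (i + (j + 2)) * pois lam j ≤ pois lam (i + (j + 1)) * pois lam (j + 1)
  have e1 : i + (j + 2) = (i + (j + 1)) + 1 := by ring
  rw [e1, pois_succ hl, pois_succ hl (j := j)]
  have h1 : lam / (((i + (j + 1) : ℕ) : ℝ) + 1) ≤ lam / ((j : ℝ) + 1) := by
    apply div_le_div_of_nonneg_left hl.le (by positivity)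
    push_cast; linarith
  have h2 : 0 ≤ pois lam (i + (j + 1)) * pois lam j :=
    mul_nonneg (pois_nonneg hl _) (pois_nonneg hl _)
  calc (lam / (((i + (j + 1) : ℕ) : ℝ) + 1)) * pois lam (i + (j + 1)) * pois lam j
      = (lam / (((i + (j + 1) : ℕ) : ℝ) + 1)) * (pois lam (i + (j + 1)) * pois lam j) := by ring
    _ ≤ (lam / ((j : ℝ) + 1)) * (pois lam (i + (j + 1)) * pois lam j) :=
        mul_le_mul_of_nonneg_right h1 h2
    _ = pois lam (i + (j + 1)) * ((lam / ((j : ℝ) + 1)) * pois lam j) := by ring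

lemma pois_jump (hl : 0 < lam) (j : ℕ) :
    poisT lam (j + 1) + (lam / (j + 1)) * poisF lam j ≤ 1 - pois lam 0 := by
  have key : (lam / ((j : ℝ) + 1)) * poisF lam j ≤ poisF lam (j + 1) - pois lam 0 := by
    unfold poisF
    rw [Finset.mul_sum, Finset.sum_range_succ' (fun i => pois lam i)]
    have : ∀ i ∈ Finset.range (j + 1), (lam / ((j : ℝ) + 1)) * pois lam i
        ≤ pois lam (i + 1) := by
      intro i hi
      have hij := Nat.lt_succ_iff.mp (Finset.mem_range.mp hi)
      have hijR : (i : ℝ) ≤ (j : ℝ) := Nat.cast_le.mpr hij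
      rw [pois_succ hl]
      apply mul_le_mul_of_nonneg_right _ (pois_nonneg hl _)
      apply div_le_div_of_nonneg_left hl.le (by positivity)
      linarith
    have := Finset.sum_le_sum this
    linarith
  have : poisT lam (j + 1) + (poisF lam (j + 1) - pois lam 0) = 1 - pois lam 0 := by
    unfold poisT; ring
  push_cast at key ⊢
  linarith

end lemmasA

section steinSec
variable {lam : ℝ}

lemma indicator_pois_eq (A : Set ℕ) (j : ℕ) :
    A.indicator (pois lam) j = pois lam j * A.indicator (1 : ℕ → ℝ) j := by
  by_cases h : j ∈ A <;> simp [h]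

lemma steinG_eq (hl : 0 < lam) (qA : ℝ) (A : Set ℕ) (j : ℕ) :
    lam * steinG lam qA A (j + 1) - (j : ℝ) * steinG lam qA A j
      = A.indicator (1 : ℕ → ℝ) j - qA := by
  have hlne : lam ≠ 0 := hl.ne'
  cases j with
  | zero =>
    have hπ : pois lam 0 ≠ 0 := (pois_pos hl 0).ne'
    show lam * ((poisS lam A 0 - qA * poisF lam 0) / (lam * pois lam 0))
        - ((0 : ℕ) : ℝ) * steinG lam qA A 0 = A.indicator (1 : ℕ → ℝ) 0 - qA
    unfold poisS poisF
    rw [Finset.sum_range_one, Finset.sum_range_one, indicator_pois_eq]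
    push_cast
    field_simp
    ring
  | succ k =>
    have hπk : pois lam k ≠ 0 := (pois_pos hl k).ne'
    have hπk1 : pois lam (k + 1) ≠ 0 := (pois_pos hl (k + 1)).ne'
    have hk1 : ((k : ℝ) + 1) ≠ 0 := by positivity
    have hrel : lam * pois lam k = ((k : ℝ) + 1) * pois lam (k + 1) := by
      rw [pois_succ hl]
      field_simp
    show lam * ((poisS lam A (k + 1) - qA * poisF lam (k + 1)) / (lam * pois lam (k + 1)))
        - (((k + 1 : ℕ)) : ℝ) * ((poisS lam A k - qA * poisF lam k) / (lam * pois lam k))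
        = A.indicator (1 : ℕ → ℝ) (k + 1) - qA
    have hA : lam * ((poisS lam A (k + 1) - qA * poisF lam (k + 1)) / (lam * pois lam (k + 1)))
        = (poisS lam A (k + 1) - qA * poisF lam (k + 1)) / pois lam (k + 1) := by
      field_simp
    have hB : ((k : ℝ) + 1) * ((poisS lam A k - qA * poisF lam k) / (lam * pois lam k))
        = (poisS lam A k - qA * poisF lam k) / pois lam (k + 1) := by
      rw [hrel]
      field_simp
    push_cast
    rw [hA, hB, div_sub_div_same]
    have hS : poisS lam A (k + 1) = poisS lam A k + pois lam (k + 1)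
        * A.indicator (1 : ℕ → ℝ) (k + 1) := by
      unfold poisS
      rw [Finset.sum_range_succ, indicator_pois_eq]
    have hF : poisF lam (k + 1) = poisF lam k + pois lam (k + 1) := by
      unfold poisF
      rw [Finset.sum_range_succ]
    rw [hS, hF]
    field_simp
    ring

lemma poisS_succ_not_mem (A : Set ℕ) (k : ℕ) (h : (k + 1) ∉ A) :
    poisS lam A (k + 1) = poisS lam A k := by
  unfold poisS
  rw [Finset.sum_range_succ, Set.indicator_of_notMem h, add_zero]

lemma poisS_succ_mem (A : Set ℕ) (k : ℕ) (h : (k + 1) ∈ A) :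
    poisS lam A (k + 1) = poisS lam A k + pois lam (k + 1) := by
  unfold poisS
  rw [Finset.sum_range_succ, Set.indicator_of_mem h]

lemma poisS_succ (A : Set ℕ) (m : ℕ) :
    poisS lam A (m + 1) = poisS lam A m + A.indicator (pois lam) (m + 1) := by
  unfold poisS
  rw [Finset.sum_range_succ]

lemma poisS_mono (hl : 0 < lam) (A : Set ℕ) {m m' : ℕ} (h : m ≤ m') :
    poisS lam A m ≤ poisS lam A m' := by
  unfold poisS
  apply Finset.sum_le_sum_of_subset_of_nonneg
  · exact Finset.range_subset_range.mpr (by omega)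
  · intro i _ _
    exact Set.indicator_nonneg (fun kk _ => pois_nonneg hl kk) i

/-- Splitting off a member singleton at the level of partial sums. -/
lemma poisS_split (A : Set ℕ) {j : ℕ} (hj : j ∈ A) (m : ℕ) :
    poisS lam A m = poisS lam (A \ {j}) m + poisS lam ({j} : Set ℕ) m := by
  unfold poisS
  rw [← Finset.sum_add_distrib]
  apply Finset.sum_congr rfl
  intro x _
  by_cases hx : x = j
  · subst hx
    rw [Set.indicator_of_mem hj, Set.indicator_of_notMem (fun h => h.2 rfl),
      Set.indicator_of_mem (Set.mem_singleton x)]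
    ring
  · by_cases hxA : x ∈ A
    · rw [Set.indicator_of_mem hxA, Set.indicator_of_mem (Set.mem_diff_of_mem hxA (by simp [hx])),
        Set.indicator_of_notMem (by simp [hx])]
      ring
    · rw [Set.indicator_of_notMem hxA, Set.indicator_of_notMem (fun h => hxA h.1),
        Set.indicator_of_notMem (by simp [hx])]
      ring

lemma poisS_singleton_lt (k : ℕ) {j : ℕ} (hjk : k < j) : poisS lam ({j} : Set ℕ) k = 0 := by
  unfold poisS
  apply Finset.sum_eq_zero
  intro x hx
  have := Finset.mem_range.mp hx
  exact Set.indicator_of_notMem (by simp; omega) _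

lemma poisS_singleton_ge (k j : ℕ) (hjk : j ≤ k) :
    poisS lam ({j} : Set ℕ) k = pois lam j := by
  unfold poisS
  rw [Finset.sum_eq_single j]
  · exact Set.indicator_of_mem rfl _
  · intro x _ hx
    exact Set.indicator_of_notMem (by simp [hx]) _
  · intro h
    exact absurd (Finset.mem_range.mpr (by omega)) h

/-- In the case `k+1 ∉ A`, the Stein solution does not increase. -/
lemma steinG_delta_nonpos (hl : 0 < lam) (A : Set ℕ) (qA : ℝ)
    (h1 : ∀ m, poisS lam A m ≤ qA) (k : ℕ) (hk : (k + 1) ∉ A) :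
    steinG lam qA A (k + 2) - steinG lam qA A (k + 1) ≤ 0 := by
  have ha : 0 ≤ poisS lam A k := poisS_nonneg hl A k
  have hb : 0 ≤ qA - poisS lam A (k + 1) := sub_nonneg.mpr (h1 (k + 1))
  rw [poisS_succ_not_mem A k hk] at hb
  set a := poisS lam A k with hadef
  set b := qA - a with hbdef
  have hq : qA = a + b := by rw [hbdef]; ring
  show (poisS lam A (k + 1) - qA * poisF lam (k + 1)) / (lam * pois lam (k + 1))
      - (poisS lam A k - qA * poisF lam k) / (lam * pois lam k) ≤ 0
  rw [poisS_succ_not_mem A k hk, ← hadef, sub_nonpos, div_le_div_iff₀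
    (mul_pos hl (pois_pos hl _)) (mul_pos hl (pois_pos hl _))]
  have e1 : a - qA * poisF lam (k + 1)
      = a * poisT lam (k + 1) - b * poisF lam (k + 1) := by
    unfold poisT; rw [hq]; ring
  have e2 : a - qA * poisF lam k = a * poisT lam k - b * poisF lam k := by
    unfold poisT; rw [hq]; ring
  rw [e1, e2]
  have m1 : a * (poisT lam (k + 1) * pois lam k) ≤ a * (poisT lam k * pois lam (k + 1)) :=
    mul_le_mul_of_nonneg_left (poisT_ratio hl k) ha
  have m2 : b * (poisF lam k * pois lam (k + 1)) ≤ b * (poisF lam (k + 1) * pois lam k) :=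
    mul_le_mul_of_nonneg_left (poisF_ratio hl k) hb
  nlinarith [hl, m1, m2]

/-- Splitting off a singleton from `A` for the Stein solution. -/
lemma steinG_split (hl : 0 < lam) (A : Set ℕ) (qA : ℝ) (j : ℕ) (hj : j ∈ A) (m : ℕ) :
    steinG lam qA A m
      = steinG lam (qA - pois lam j) (A \ {j}) m + steinG lam (pois lam j) {j} m := by
  cases m with
  | zero => simp [steinG]
  | succ i =>
    show (poisS lam A i - qA * poisF lam i) / (lam * pois lam i)
        = (poisS lam (A \ {j}) i - (qA - pois lam j) * poisF lam i) / (lam * pois lam i)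
          + (poisS lam {j} i - pois lam j * poisF lam i) / (lam * pois lam i)
    rw [← add_div]
    congr 1
    rw [poisS_split A hj i]
    ring

/-- The singleton jump bound. -/
lemma steinG_single_jump (hl : 0 < lam) (k : ℕ) :
    steinG lam (pois lam (k + 1)) {k + 1} (k + 2)
      - steinG lam (pois lam (k + 1)) {k + 1} (k + 1) ≤ (1 - pois lam 0) / lam := by
  have hπk : (0 : ℝ) < pois lam k := pois_pos hl k
  have hπk1 : (0 : ℝ) < pois lam (k + 1) := pois_pos hl (k + 1)
  have e1 : steinG lam (pois lam (k + 1)) {k + 1} (k + 2) = poisT lam (k + 1) / lam := by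
    show (poisS lam {k + 1} (k + 1) - pois lam (k + 1) * poisF lam (k + 1))
        / (lam * pois lam (k + 1)) = _
    rw [poisS_singleton_ge (k + 1) (k + 1) le_rfl]
    unfold poisT
    field_simp
  have e2 : steinG lam (pois lam (k + 1)) {k + 1} (k + 1)
      = -((lam / ((k : ℝ) + 1)) * poisF lam k) / lam := by
    show (poisS lam {k + 1} k - pois lam (k + 1) * poisF lam k) / (lam * pois lam k) = _
    rw [poisS_singleton_lt k (by omega), pois_succ hl]
    have hk1 : ((k : ℝ) + 1) ≠ 0 := by positivity
    field_simp
    ring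
  rw [e1, e2]
  have hj := pois_jump hl k
  have e3 : poisT lam (k + 1) / lam - -((lam / ((k : ℝ) + 1)) * poisF lam k) / lam
      = (poisT lam (k + 1) + (lam / ((k : ℝ) + 1)) * poisF lam k) / lam := by ring
  rw [e3]
  exact (div_le_div_iff_of_pos_right hl).mpr hj

/-- Upper Lipschitz bound for the Stein solution. -/
lemma steinG_delta_le (hl : 0 < lam) (A : Set ℕ) (qA : ℝ)
    (h1 : ∀ m, poisS lam A m ≤ qA) (k : ℕ) :
    steinG lam qA A (k + 2) - steinG lam qA A (k + 1) ≤ (1 - pois lam 0) / lam := by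
  have hc : 0 ≤ (1 - pois lam 0) / lam := by
    apply div_nonneg _ hl.le
    have hpe : pois lam 0 = Real.exp (-lam) := by unfold pois; simp
    rw [hpe]
    have := Real.exp_le_one_iff.mpr (by linarith : -lam ≤ 0)
    linarith
  by_cases hk : (k + 1) ∈ A
  · have hsplit := steinG_split hl A qA (k + 1) hk
    rw [hsplit (k + 2), hsplit (k + 1)]
    have hd : steinG lam (qA - pois lam (k + 1)) (A \ {k + 1}) (k + 2)
        - steinG lam (qA - pois lam (k + 1)) (A \ {k + 1}) (k + 1) ≤ 0 := by
      apply steinG_delta_nonpos hl _ _ _ k (fun h => h.2 rfl)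
      intro m
      have hSm := poisS_split (lam := lam) A hk m
      rcases le_or_gt (k + 1) m with hm | hm
      · rw [poisS_singleton_ge m (k + 1) hm] at hSm
        have := h1 m
        linarith
      · rw [poisS_singleton_lt m hm] at hSm
        have h2 : poisS lam A m ≤ poisS lam A k := poisS_mono hl A (by omega)
        have h3 : poisS lam A (k + 1) = poisS lam A k + pois lam (k + 1) :=
          poisS_succ_mem A k hk
        have := h1 (k + 1)
        linarith
    have := steinG_single_jump hl k
    linarith
  · have := steinG_delta_nonpos hl A qA h1 k hk
    linarith

end steinSec

/-- Theorem 2 of Daly, Lefèvre, Utev: Poisson approximation for a sum of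
totally positively dependent (TPD) indicators with `E[W] = λ`. -/
theorem stmt10
    {Ω Ω' : Type*} [MeasurableSpace Ω] [MeasurableSpace Ω']
    (P : Measure Ω) [IsProbabilityMeasure P]
    (P' : Measure Ω') [IsProbabilityMeasure P']
    (n : ℕ) (X : Fin n → Ω → ℕ) (hXm : ∀ i, Measurable (X i))
    (hX01 : ∀ i ω, X i ω ≤ 1)
    (p : Fin n → ℝ) (hp : ∀ i, p i = (P {ω | X i ω = 1}).toReal)
    (W : Ω → ℕ) (hWdef : ∀ ω, W ω = ∑ i, X i ω)
    (lam : ℝ) (hlam : lam = ∫ ω, (W ω : ℝ) ∂P) (hlam0 : 0 < lam)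
    (hTPD : ∀ (i : Fin n) (g₁ g₂ : ℝ → ℝ), Monotone g₁ → Monotone g₂ →
      (∫ ω, g₁ (X i ω : ℝ) ∂P) * (∫ ω, g₂ ((W ω - X i ω : ℕ) : ℝ) ∂P) ≤
        ∫ ω, g₁ (X i ω : ℝ) * g₂ ((W ω - X i ω : ℕ) : ℝ) ∂P)
    (π : Ω' → ℕ) (hπ : Measurable π)
    (hπpmf : ∀ j : ℕ, (P' {ω | π ω = j}).toReal =
      Real.exp (-lam) * lam ^ j / (Nat.factorial j : ℝ)) :
    dTV (Measure.map (fun ω => (W ω : ℤ)) P) (Measure.map (fun ω => (π ω : ℤ)) P') ≤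
      ((1 - Real.exp (-lam)) / lam) *
        ((∫ ω, (W ω : ℝ) ^ 2 ∂P) + 2 * (∑ i, (p i) ^ 2) - lam * (lam + 1)) := by
  classical
  set c : ℝ := (1 - Real.exp (-lam)) / lam with hcdef
  set R : ℝ := c * ((∫ ω, (W ω : ℝ) ^ 2 ∂P) + 2 * (∑ i, (p i) ^ 2) - lam * (lam + 1)) with hRdef
  have hpois0 : pois lam 0 = Real.exp (-lam) := by unfold pois; simp
  -- basic measurability and bounds
  have hWm : Measurable W := by
    have : W = fun ω => ∑ i, X i ω := funext hWdef
    rw [this]; exact Finset.measurable_sum _ (fun i _ => hXm i)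
  have hWle : ∀ ω, W ω ≤ n := by
    intro ω
    rw [hWdef]
    calc ∑ i, X i ω ≤ ∑ _i : Fin n, 1 := Finset.sum_le_sum (fun i _ => hX01 i ω)
      _ = n := by simp
  have hXW : ∀ i ω, X i ω ≤ W ω := by
    intro i ω
    rw [hWdef]
    exact Finset.single_le_sum (f := fun j => X j ω) (fun j _ => Nat.zero_le _)
      (Finset.mem_univ i)
  have measA : ∀ (f : Ω → ℕ) (S : Set ℕ), Measurable f → MeasurableSet {ω | f ω ∈ S} :=
    fun f S hf => hf (show MeasurableSet S from trivial)
  have measA' : ∀ (f : Ω' → ℕ) (S : Set ℕ), Measurable f → MeasurableSet {ω | f ω ∈ S} :=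
    fun f S hf => hf (show MeasurableSet S from trivial)
  -- integrability helpers
  have intb : ∀ (u : Ω → ℝ), Measurable u → ∀ C : ℝ, (∀ ω, |u ω| ≤ C) → Integrable u P := by
    intro u hm C hb
    exact (integrable_const C).mono' hm.aestronglyMeasurable
      (Filter.Eventually.of_forall (fun ω => by rw [Real.norm_eq_abs]; exact hb ω))
  have bcomp : ∀ (φ : ℕ → ℝ) (N : ℕ) (k : ℕ), k ≤ N →
      |φ k| ≤ (Finset.range (N + 1)).sup' ⟨N, Finset.self_mem_range_succ N⟩ (fun m => |φ m|) := by
    intro φ N k hk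
    exact Finset.le_sup' (fun m => |φ m|) (Finset.mem_range.mpr (by omega))
  have intcomp : ∀ (f : Ω → ℕ), Measurable f → ∀ N : ℕ, (∀ ω, f ω ≤ N) →
      ∀ φ : ℕ → ℝ, Integrable (fun ω => φ (f ω)) P := by
    intro f hf N hN φ
    exact intb _ (measurable_from_top.comp hf) _ (fun ω => bcomp φ N (f ω) (hN ω))
  have intcomp2 : ∀ (f g : Ω → ℕ), Measurable f → Measurable g → ∀ N : ℕ,
      (∀ ω, f ω ≤ N) → (∀ ω, g ω ≤ N) → ∀ φ ψ : ℕ → ℝ,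
      Integrable (fun ω => φ (f ω) * ψ (g ω)) P := by
    intro f g hf hg N hNf hNg φ ψ
    apply intb _ ((measurable_from_top.comp hf).mul (measurable_from_top.comp hg))
      (((Finset.range (N + 1)).sup' ⟨N, Finset.self_mem_range_succ N⟩ (fun m => |φ m|)) *
        ((Finset.range (N + 1)).sup' ⟨N, Finset.self_mem_range_succ N⟩ (fun m => |ψ m|)))
    intro ω
    refine (abs_mul (φ (f ω)) (ψ (g ω))).trans_le ?_
    exact mul_le_mul (bcomp φ N (f ω) (hNf ω)) (bcomp ψ N (g ω) (hNg ω)) (abs_nonneg _)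
      ((abs_nonneg (φ (f ω))).trans (bcomp φ N (f ω) (hNf ω)))
  -- Wᵢ measurability and bound
  have hWim : ∀ i, Measurable (fun ω => W ω - X i ω) := fun i => hWm.sub (hXm i)
  have hWile : ∀ i ω, W ω - X i ω ≤ n := fun i ω => le_trans (Nat.sub_le _ _) (hWle ω)
  -- cast of Xᵢ as indicator
  have hXcast : ∀ i, (fun ω => (X i ω : ℝ)) = Set.indicator {ω | X i ω = 1} 1 := by
    intro i
    funext ω
    rcases Nat.le_one_iff_eq_zero_or_eq_one.mp (hX01 i ω) with h | h
    · rw [Set.indicator_of_notMem (by simp [Set.mem_setOf_eq, h])]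
      simp [h]
    · rw [Set.indicator_of_mem (by simpa [Set.mem_setOf_eq] using h)]
      simp [h]
  have hXint : ∀ i, Integrable (fun ω => (X i ω : ℝ)) P :=
    fun i => intcomp (X i) (hXm i) 1 (hX01 i) (fun k => (k : ℝ))
  have hEX : ∀ i, ∫ ω, (X i ω : ℝ) ∂P = p i := by
    intro i
    rw [hXcast i, hp i]
    exact integral_indicator_one (measA (X i) {k | k = 1} (hXm i))
  have hWint : Integrable (fun ω => (W ω : ℝ)) P :=
    intcomp W hWm n hWle (fun k => (k : ℝ))
  have hlam_sum : lam = ∑ i, p i := by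
    rw [hlam]
    have e : (fun ω => (W ω : ℝ)) = fun ω => ∑ i, (X i ω : ℝ) := by
      funext ω; rw [hWdef]; push_cast; rfl
    rw [e, integral_finset_sum _ (fun i _ => hXint i)]
    exact Finset.sum_congr rfl (fun i _ => hEX i)
  have hpnn : ∀ i, 0 ≤ p i := fun i => (hp i) ▸ ENNReal.toReal_nonneg
  -- Poisson side: splitting lemma for the measure of {π ∈ A}
  have hstep : ∀ (B : Set ℕ) (j : ℕ), (P' {ω | π ω ∈ B ∧ j ≤ π ω}).toReal
      = B.indicator (pois lam) j + (P' {ω | π ω ∈ B ∧ j + 1 ≤ π ω}).toReal := by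
    intro B j
    by_cases hj : j ∈ B
    · have hset : {ω | π ω ∈ B ∧ j ≤ π ω}
          = {ω | π ω = j} ∪ {ω | π ω ∈ B ∧ j + 1 ≤ π ω} := by
        ext ω
        simp only [Set.mem_setOf_eq, Set.mem_union]
        constructor
        · rintro ⟨h1, h2⟩
          by_cases he : π ω = j
          · exact Or.inl he
          · exact Or.inr ⟨h1, by omega⟩
        · rintro (h | ⟨h1, h2⟩)
          · exact ⟨h ▸ hj, h.ge⟩
          · exact ⟨h1, by omega⟩
      have hdisj : Disjoint {ω | π ω = j} {ω | π ω ∈ B ∧ j + 1 ≤ π ω} := by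
        rw [Set.disjoint_left]
        rintro ω h1 ⟨_, h3⟩
        simp only [Set.mem_setOf_eq] at h1
        omega
      rw [hset, measure_union hdisj (measA' π {k | k ∈ B ∧ j + 1 ≤ k} hπ), ENNReal.toReal_add
        (measure_ne_top P' _) (measure_ne_top P' _), hπpmf j, Set.indicator_of_mem hj]
      rfl
    · have hset : {ω | π ω ∈ B ∧ j ≤ π ω} = {ω | π ω ∈ B ∧ j + 1 ≤ π ω} := by
        ext ω
        simp only [Set.mem_setOf_eq]
        constructor
        · rintro ⟨h1, h2⟩
          refine ⟨h1, ?_⟩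
          rcases Nat.eq_or_lt_of_le h2 with he | he
          · exact absurd (he ▸ h1) hj
          · omega
        · rintro ⟨h1, h2⟩
          exact ⟨h1, by omega⟩
      rw [hset, Set.indicator_of_notMem hj, zero_add]
  have hqsplit : ∀ (B : Set ℕ) (m : ℕ), (P' {ω | π ω ∈ B}).toReal
      = poisS lam B m + (P' {ω | π ω ∈ B ∧ m + 1 ≤ π ω}).toReal := by
    intro B m
    induction m with
    | zero =>
      have e0 : {ω | π ω ∈ B} = {ω | π ω ∈ B ∧ 0 ≤ π ω} := by
        ext ω; simp [Set.mem_setOf_eq]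
      rw [e0, hstep B 0]
      unfold poisS
      rw [Finset.sum_range_one]
    | succ m ih =>
      rw [ih, hstep B (m + 1), poisS_succ]
      ring
  have hq1 : ∀ (B : Set ℕ) (m : ℕ), poisS lam B m ≤ (P' {ω | π ω ∈ B}).toReal := by
    intro B m
    rw [hqsplit B m]
    have : (0 : ℝ) ≤ (P' {ω | π ω ∈ B ∧ m + 1 ≤ π ω}).toReal := ENNReal.toReal_nonneg
    linarith
  have hqtail : ∀ (m : ℕ), (P' {ω | π ω ∈ (Set.univ : Set ℕ) ∧ m + 1 ≤ π ω}).toReal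
      = poisT lam m := by
    intro m
    have huniv : (P' {ω | π ω ∈ (Set.univ : Set ℕ)}).toReal = 1 := by
      have : {ω | π ω ∈ (Set.univ : Set ℕ)} = Set.univ := by ext ω; simp
      rw [this, measure_univ, ENNReal.toReal_one]
    have := hqsplit Set.univ m
    rw [huniv] at this
    have hSF : poisS lam (Set.univ : Set ℕ) m = poisF lam m := by
      unfold poisS poisF
      simp [Set.indicator_univ]
    unfold poisT
    rw [← hSF]
    linarith
  have hq2 : ∀ (B : Set ℕ) (m : ℕ),
      (P' {ω | π ω ∈ B}).toReal - poisS lam B m ≤ poisT lam m := by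
    intro B m
    rw [hqsplit B m, ← hqtail m]
    have hmono : (P' {ω | π ω ∈ B ∧ m + 1 ≤ π ω}).toReal
        ≤ (P' {ω | π ω ∈ (Set.univ : Set ℕ) ∧ m + 1 ≤ π ω}).toReal := by
      apply ENNReal.toReal_mono (measure_ne_top P' _)
      apply measure_mono
      intro ω hω
      exact ⟨trivial, hω.2⟩
    linarith
  -- the key one-sided bound
  have key : ∀ A : Set ℕ,
      (P {ω | W ω ∈ A}).toReal - (P' {ω | π ω ∈ A}).toReal ≤ R := by
    intro A
    set qA : ℝ := (P' {ω | π ω ∈ A}).toReal with hqA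
    set G : ℕ → ℝ := steinG lam qA A with hG
    have h1 : ∀ m, poisS lam A m ≤ qA := hq1 A
    have h2 : ∀ m, qA - poisS lam A m ≤ poisT lam m := hq2 A
    have hdle : ∀ k, G (k + 2) - G (k + 1) ≤ c := by
      intro k
      have := steinG_delta_le hlam0 A qA h1 k
      rwa [hpois0] at this
    have hSc : ∀ m, poisS lam Aᶜ m = poisF lam m - poisS lam A m := by
      intro m
      unfold poisS poisF
      rw [← Finset.sum_sub_distrib]
      apply Finset.sum_congr rfl
      intro x _
      by_cases hx : x ∈ A
      · rw [Set.indicator_of_notMem (by simp [hx]), Set.indicator_of_mem hx]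
        ring
      · rw [Set.indicator_of_mem (by simp [hx] : x ∈ Aᶜ), Set.indicator_of_notMem hx]
        ring
    have hdge : ∀ k, -c ≤ G (k + 2) - G (k + 1) := by
      intro k
      have hcompl : ∀ m, steinG lam (1 - qA) Aᶜ m = - steinG lam qA A m := by
        intro m
        cases m with
        | zero => simp [steinG]
        | succ i =>
          show (poisS lam Aᶜ i - (1 - qA) * poisF lam i) / (lam * pois lam i)
              = -((poisS lam A i - qA * poisF lam i) / (lam * pois lam i))
          rw [hSc i, ← neg_div]
          congr 1
          ring
      have h1c : ∀ m, poisS lam Aᶜ m ≤ 1 - qA := by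
        intro m
        rw [hSc m]
        have := h2 m
        unfold poisT at this
        linarith
      have hd := steinG_delta_le hlam0 Aᶜ (1 - qA) h1c k
      rw [hpois0, hcompl (k + 2), hcompl (k + 1)] at hd
      rw [← hG] at hd
      linarith
    have hdabs : ∀ k, |G (k + 2) - G (k + 1)| ≤ c := fun k =>
      abs_le.mpr ⟨hdge k, hdle k⟩
    have hcnn : 0 ≤ c := le_trans (abs_nonneg _) (hdabs 0)
    -- measurability bits
    have mW1 : Measurable (fun ω => W ω + 1) :=
      (measurable_from_top (f := fun k : ℕ => k + 1)).comp hWm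
    -- integrability of the various integrands
    have iGW1 : Integrable (fun ω => G (W ω + 1)) P :=
      intcomp _ mW1 (n + 1) (fun ω => by have := hWle ω; omega) G
    have iWGW : Integrable (fun ω => (W ω : ℝ) * G (W ω)) P :=
      intcomp2 W W hWm hWm n hWle hWle (fun k => (k : ℝ)) G
    have iXGW : ∀ i, Integrable (fun ω => (X i ω : ℝ) * G (W ω)) P := fun i =>
      intcomp2 (X i) W (hXm i) hWm n (fun ω => le_trans (hX01 i ω) i.pos) hWle
        (fun k => (k : ℝ)) G
    have iGWi1 : ∀ i, Integrable (fun ω => G ((W ω - X i ω) + 1)) P := fun i =>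
      intcomp _ (hWim i) n (hWile i) (fun k => G (k + 1))
    have iXGWi1 : ∀ i, Integrable (fun ω => (X i ω : ℝ) * G ((W ω - X i ω) + 1)) P := fun i =>
      intcomp2 (X i) _ (hXm i) (hWim i) n (fun ω => le_trans (hX01 i ω) i.pos) (hWile i)
        (fun k => (k : ℝ)) (fun k => G (k + 1))
    have iXd : ∀ i, Integrable
        (fun ω => (X i ω : ℝ) * (G ((W ω - X i ω) + 2) - G ((W ω - X i ω) + 1))) P := fun i =>
      intcomp2 (X i) _ (hXm i) (hWim i) n (fun ω => le_trans (hX01 i ω) i.pos) (hWile i)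
        (fun k => (k : ℝ)) (fun k => G (k + 2) - G (k + 1))
    have iWi : ∀ i, Integrable (fun ω => ((W ω - X i ω : ℕ) : ℝ)) P := fun i =>
      intcomp _ (hWim i) n (hWile i) (fun k => (k : ℝ))
    have iXWi : ∀ i, Integrable (fun ω => (X i ω : ℝ) * ((W ω - X i ω : ℕ) : ℝ)) P := fun i =>
      intcomp2 (X i) _ (hXm i) (hWim i) n (fun ω => le_trans (hX01 i ω) i.pos) (hWile i)
        (fun k => (k : ℝ)) (fun k => (k : ℝ))
    have iXW : ∀ i, Integrable (fun ω => (X i ω : ℝ) * (W ω : ℝ)) P := fun i =>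
      intcomp2 (X i) W (hXm i) hWm n (fun ω => le_trans (hX01 i ω) i.pos) hWle
        (fun k => (k : ℝ)) (fun k => (k : ℝ))
    have iInd : Integrable (fun ω => A.indicator (1 : ℕ → ℝ) (W ω)) P :=
      intcomp W hWm n hWle (fun k => A.indicator (1 : ℕ → ℝ) k)
    -- the Stein expectation identity
    have hI1 : ∫ ω, A.indicator (1 : ℕ → ℝ) (W ω) ∂P = (P {ω | W ω ∈ A}).toReal := by
      have hind : (fun ω => A.indicator (1 : ℕ → ℝ) (W ω))
          = Set.indicator {ω | W ω ∈ A} (1 : Ω → ℝ) := by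
        funext ω
        by_cases h : W ω ∈ A <;>
          simp [Set.indicator_apply, Set.mem_setOf_eq, h]
      rw [hind]
      exact integral_indicator_one (measA W A hWm)
    have hmain : (P {ω | W ω ∈ A}).toReal - qA
        = lam * (∫ ω, G (W ω + 1) ∂P) - ∫ ω, (W ω : ℝ) * G (W ω) ∂P := by
      have hptw : (fun ω => A.indicator (1 : ℕ → ℝ) (W ω) - qA)
          = fun ω => lam * G (W ω + 1) - (W ω : ℝ) * G (W ω) :=
        funext fun ω => (steinG_eq hlam0 qA A (W ω)).symm
      have e1 : ∫ ω, (A.indicator (1 : ℕ → ℝ) (W ω) - qA) ∂P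
          = (P {ω | W ω ∈ A}).toReal - qA := by
        rw [integral_sub iInd (integrable_const qA), hI1, integral_const]
        simp
      have e2 : ∫ ω, (lam * G (W ω + 1) - (W ω : ℝ) * G (W ω)) ∂P
          = lam * (∫ ω, G (W ω + 1) ∂P) - ∫ ω, (W ω : ℝ) * G (W ω) ∂P := by
        rw [integral_sub (iGW1.const_mul lam) iWGW, integral_const_mul]
      rw [← e1, hptw, e2]
    have hWG : ∫ ω, (W ω : ℝ) * G (W ω) ∂P = ∑ i, ∫ ω, (X i ω : ℝ) * G (W ω) ∂P := by
      have e : (fun ω => (W ω : ℝ) * G (W ω)) = fun ω => ∑ i, (X i ω : ℝ) * G (W ω) := by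
        funext ω
        rw [← Finset.sum_mul]
        congr 1
        rw [hWdef]
        push_cast
        rfl
      rw [e, integral_finset_sum _ (fun i _ => iXGW i)]
    have hmain2 : (P {ω | W ω ∈ A}).toReal - qA
        = ∑ i, (p i * (∫ ω, G (W ω + 1) ∂P) - ∫ ω, (X i ω : ℝ) * G (W ω) ∂P) := by
      rw [hmain, hWG, hlam_sum, Finset.sum_mul, ← Finset.sum_sub_distrib]
    -- the per-index bound
    have hper : ∀ i : Fin n,
        p i * (∫ ω, G (W ω + 1) ∂P) - ∫ ω, (X i ω : ℝ) * G (W ω) ∂P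
          ≤ c * (p i ^ 2 + ((∫ ω, (X i ω : ℝ) * ((W ω - X i ω : ℕ) : ℝ) ∂P)
            - p i * ∫ ω, ((W ω - X i ω : ℕ) : ℝ) ∂P)) := by
      intro i
      -- split G(W+1)
      have hsplit : ∫ ω, G (W ω + 1) ∂P
          = (∫ ω, G ((W ω - X i ω) + 1) ∂P)
            + ∫ ω, (X i ω : ℝ) * (G ((W ω - X i ω) + 2) - G ((W ω - X i ω) + 1)) ∂P := by
        have e : (fun ω => G (W ω + 1)) = fun ω => G ((W ω - X i ω) + 1)
            + (X i ω : ℝ) * (G ((W ω - X i ω) + 2) - G ((W ω - X i ω) + 1)) := by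
          funext ω
          rcases Nat.le_one_iff_eq_zero_or_eq_one.mp (hX01 i ω) with hx | hx
          · simp [hx]
          · have hW1 : W ω + 1 = (W ω - X i ω) + 2 := by
              have := hXW i ω; omega
            rw [hW1, hx]
            push_cast
            ring
        rw [e, integral_add (iGWi1 i) (iXd i)]
      -- rewrite X·G(W) using W = Wᵢ + 1 on {Xᵢ = 1}
      have hXGWeq : ∫ ω, (X i ω : ℝ) * G (W ω) ∂P
          = ∫ ω, (X i ω : ℝ) * G ((W ω - X i ω) + 1) ∂P := by
        have e : (fun ω => (X i ω : ℝ) * G (W ω))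
            = fun ω => (X i ω : ℝ) * G ((W ω - X i ω) + 1) := by
          funext ω
          rcases Nat.le_one_iff_eq_zero_or_eq_one.mp (hX01 i ω) with hx | hx
          · simp [hx]
          · have hW1 : W ω = (W ω - X i ω) + 1 := by
              have := hXW i ω; omega
            conv_lhs => rw [hW1]
        rw [e]
      -- bound the delta term
      have hXd_le : ∫ ω, (X i ω : ℝ) * (G ((W ω - X i ω) + 2) - G ((W ω - X i ω) + 1)) ∂P
          ≤ c * p i := by
        have hpt : ∀ ω, (X i ω : ℝ) * (G ((W ω - X i ω) + 2) - G ((W ω - X i ω) + 1))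
            ≤ (X i ω : ℝ) * c := fun ω =>
          mul_le_mul_of_nonneg_left (hdle (W ω - X i ω)) (by positivity)
        calc ∫ ω, (X i ω : ℝ) * (G ((W ω - X i ω) + 2) - G ((W ω - X i ω) + 1)) ∂P
            ≤ ∫ ω, (X i ω : ℝ) * c ∂P :=
              integral_mono (iXd i) ((hXint i).mul_const c) hpt
          _ = p i * c := by rw [integral_mul_const, hEX i]
          _ = c * p i := mul_comm _ _
      -- TPD gives the covariance bound
      have hcov : p i * (∫ ω, G ((W ω - X i ω) + 1) ∂P)
          - ∫ ω, (X i ω : ℝ) * G ((W ω - X i ω) + 1) ∂P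
          ≤ c * ((∫ ω, (X i ω : ℝ) * ((W ω - X i ω : ℕ) : ℝ) ∂P)
            - p i * ∫ ω, ((W ω - X i ω : ℕ) : ℝ) ∂P) := by
        set v : ℕ → ℝ := fun k => c * k + G (k + 1) with hv
        have hvmono : Monotone v := by
          apply monotone_nat_of_le_succ
          intro k
          have := hdge k
          simp only [hv]
          push_cast
          nlinarith [hcnn]
        have hg2 : Monotone (fun x : ℝ => v ⌊x⌋₊) := fun a b hab => hvmono (Nat.floor_mono hab)
        have htpd := hTPD i id (fun x : ℝ => v ⌊x⌋₊) monotone_id hg2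
        simp only [id_eq, Nat.floor_natCast, hv] at htpd
        have eL : ∫ ω, (c * ((W ω - X i ω : ℕ) : ℝ) + G ((W ω - X i ω) + 1)) ∂P
            = c * (∫ ω, ((W ω - X i ω : ℕ) : ℝ) ∂P) + ∫ ω, G ((W ω - X i ω) + 1) ∂P := by
          rw [integral_add ((iWi i).const_mul c) (iGWi1 i), integral_const_mul]
        have eR : ∫ ω, (X i ω : ℝ) * (c * ((W ω - X i ω : ℕ) : ℝ) + G ((W ω - X i ω) + 1)) ∂P
            = c * (∫ ω, (X i ω : ℝ) * ((W ω - X i ω : ℕ) : ℝ) ∂P)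
              + ∫ ω, (X i ω : ℝ) * G ((W ω - X i ω) + 1) ∂P := by
          have e : (fun ω => (X i ω : ℝ) * (c * ((W ω - X i ω : ℕ) : ℝ) + G ((W ω - X i ω) + 1)))
              = fun ω => c * ((X i ω : ℝ) * ((W ω - X i ω : ℕ) : ℝ))
                + (X i ω : ℝ) * G ((W ω - X i ω) + 1) := by
            funext ω; ring
          rw [e, integral_add ((iXWi i).const_mul c) (iXGWi1 i), integral_const_mul]
        rw [hEX i, eL, eR] at htpd
        nlinarith [htpd]
      have hkey := mul_le_mul_of_nonneg_left hXd_le (hpnn i)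
      rw [hXGWeq, hsplit]
      nlinarith [hcov, hkey]
    -- sum everything up
    have hEXW : ∀ i : Fin n, ∫ ω, (X i ω : ℝ) * ((W ω - X i ω : ℕ) : ℝ) ∂P
        = (∫ ω, (X i ω : ℝ) * (W ω : ℝ) ∂P) - p i := by
      intro i
      have e : (fun ω => (X i ω : ℝ) * ((W ω - X i ω : ℕ) : ℝ))
          = fun ω => (X i ω : ℝ) * (W ω : ℝ) - (X i ω : ℝ) := by
        funext ω
        rw [Nat.cast_sub (hXW i ω)]
        rcases Nat.le_one_iff_eq_zero_or_eq_one.mp (hX01 i ω) with hx | hx <;>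
          · rw [hx]; push_cast; ring
      rw [e, integral_sub (iXW i) (hXint i), hEX i]
    have hEWi : ∀ i : Fin n, ∫ ω, ((W ω - X i ω : ℕ) : ℝ) ∂P = lam - p i := by
      intro i
      have e : (fun ω => ((W ω - X i ω : ℕ) : ℝ)) = fun ω => (W ω : ℝ) - (X i ω : ℝ) := by
        funext ω
        rw [Nat.cast_sub (hXW i ω)]
      rw [e, integral_sub hWint (hXint i), hEX i, ← hlam]
    have hXWsum : ∑ i, ∫ ω, (X i ω : ℝ) * (W ω : ℝ) ∂P = ∫ ω, (W ω : ℝ) ^ 2 ∂P := by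
      rw [← integral_finset_sum _ (fun i _ => iXW i)]
      congr 1
      funext ω
      rw [← Finset.sum_mul]
      have : ∑ i, (X i ω : ℝ) = (W ω : ℝ) := by
        rw [hWdef]; push_cast; rfl
      rw [this, sq]
    have hfinal : ∑ i, (c * (p i ^ 2 + ((∫ ω, (X i ω : ℝ) * ((W ω - X i ω : ℕ) : ℝ) ∂P)
        - p i * ∫ ω, ((W ω - X i ω : ℕ) : ℝ) ∂P))) = R := by
      have e : ∀ i : Fin n, c * (p i ^ 2 + ((∫ ω, (X i ω : ℝ) * ((W ω - X i ω : ℕ) : ℝ) ∂P)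
          - p i * ∫ ω, ((W ω - X i ω : ℕ) : ℝ) ∂P))
          = c * (2 * p i ^ 2 + (∫ ω, (X i ω : ℝ) * (W ω : ℝ) ∂P) - p i - lam * p i) := by
        intro i
        rw [hEXW i, hEWi i]
        ring
      rw [Finset.sum_congr rfl (fun i _ => e i)]
      have e2 : ∑ i, c * (2 * p i ^ 2 + (∫ ω, (X i ω : ℝ) * (W ω : ℝ) ∂P) - p i - lam * p i)
          = c * (2 * (∑ i, p i ^ 2) + (∑ i, ∫ ω, (X i ω : ℝ) * (W ω : ℝ) ∂P)
            - (∑ i, p i) - lam * (∑ i, p i)) := by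
        rw [← Finset.mul_sum]
        congr 1
        rw [Finset.sum_sub_distrib, Finset.sum_sub_distrib, Finset.sum_add_distrib,
          ← Finset.mul_sum, ← Finset.mul_sum]
      rw [e2, hXWsum, ← hlam_sum, hRdef]
      ring
    calc (P {ω | W ω ∈ A}).toReal - qA
        = ∑ i, (p i * (∫ ω, G (W ω + 1) ∂P) - ∫ ω, (X i ω : ℝ) * G (W ω) ∂P) := hmain2
      _ ≤ ∑ i, (c * (p i ^ 2 + ((∫ ω, (X i ω : ℝ) * ((W ω - X i ω : ℕ) : ℝ) ∂P)
            - p i * ∫ ω, ((W ω - X i ω : ℕ) : ℝ) ∂P))) :=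
          Finset.sum_le_sum (fun i _ => hper i)
      _ = R := hfinal
  -- complement identities
  have hPcompl : ∀ A : Set ℕ, (P {ω | W ω ∈ Aᶜ}).toReal = 1 - (P {ω | W ω ∈ A}).toReal := by
    intro A
    have hu : {ω | W ω ∈ A} ∪ {ω | W ω ∈ Aᶜ} = Set.univ := by
      ext ω; by_cases h : W ω ∈ A <;> simp [h]
    have hd : Disjoint {ω | W ω ∈ A} {ω | W ω ∈ Aᶜ} :=
      Set.disjoint_left.mpr (fun ω h1 h2 => h2 h1)
    have hm := measure_union (μ := P) hd (measA W Aᶜ hWm)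
    rw [hu, measure_univ] at hm
    have := congrArg ENNReal.toReal hm
    rw [ENNReal.toReal_one, ENNReal.toReal_add (measure_ne_top _ _) (measure_ne_top _ _)] at this
    linarith
  have hP'compl : ∀ A : Set ℕ, (P' {ω | π ω ∈ Aᶜ}).toReal = 1 - (P' {ω | π ω ∈ A}).toReal := by
    intro A
    have hu : {ω | π ω ∈ A} ∪ {ω | π ω ∈ Aᶜ} = Set.univ := by
      ext ω; by_cases h : π ω ∈ A <;> simp [h]
    have hd : Disjoint {ω | π ω ∈ A} {ω | π ω ∈ Aᶜ} :=
      Set.disjoint_left.mpr (fun ω h1 h2 => h2 h1)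
    have hm := measure_union (μ := P') hd (measA' π Aᶜ hπ)
    rw [hu, measure_univ] at hm
    have := congrArg ENNReal.toReal hm
    rw [ENNReal.toReal_one, ENNReal.toReal_add (measure_ne_top _ _) (measure_ne_top _ _)] at this
    linarith
  -- conclude
  show dTV _ _ ≤ R
  unfold dTV
  apply ciSup_le
  intro B
  have hmapW : (Measure.map (fun ω => (W ω : ℤ)) P) B = P {ω | W ω ∈ {j : ℕ | (j : ℤ) ∈ B}} := by
    rw [Measure.map_apply (show Measurable (fun ω => ((W ω : ℕ) : ℤ)) from
      measurable_from_top.comp hWm) (trivial : MeasurableSet B)]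
    rfl
  have hmapπ : (Measure.map (fun ω => (π ω : ℤ)) P') B
      = P' {ω | π ω ∈ {j : ℕ | (j : ℤ) ∈ B}} := by
    rw [Measure.map_apply (show Measurable (fun ω => ((π ω : ℕ) : ℤ)) from
      measurable_from_top.comp hπ) (trivial : MeasurableSet B)]
    rfl
  rw [hmapW, hmapπ]
  set A : Set ℕ := {j : ℕ | (j : ℤ) ∈ B} with hA
  have k1 := key A
  have k2 := key Aᶜ
  rw [hPcompl A, hP'compl A] at k2
  exact abs_le.mpr ⟨by linarith, k1⟩
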